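/- arXiv:1802.07713 — 3 statements merged into one kernel-verified Lean document; each statement's English description precedes it below -/
import Mathlib

section
/- If both players play optimally, the number of moves in the domination game differs by at most one depending on who starts: for every finite graph G, |γ_g(G) − γ_g′(G)| ≤ 1. -/
open Finset

namespace DomGame

open scoped Classical

noncomputable section

variable {V : Type*}

/-- The closed neighborhood of `x` in `G`, as a `Finset`. -/
def closedNbr (G : SimpleGraph V) [Fintype V] (x : V) : Finset V :=
  Finset.univ.filter (fun y => y = x ∨ G.Adj x y)

lemma card_compl_lt (G : SimpleGraph V) [Fintype V] {S : Finset V} {x : V}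
    (h : ¬ closedNbr G x ⊆ S) :
    (Finset.univ \ (S ∪ closedNbr G x)).card < (Finset.univ \ S).card := by
  obtain ⟨v, hvN, hvS⟩ := Finset.not_subset.mp h
  apply Finset.card_lt_card
  have hsub : Finset.univ \ (S ∪ closedNbr G x) ⊆ Finset.univ \ S := by
    intro y hy
    simp only [Finset.mem_sdiff, Finset.mem_univ, Finset.mem_union, true_and, not_or] at hy ⊢
    exact hy.1
  exact (Finset.ssubset_iff_of_subset hsub).mpr ⟨v, by simp [hvS], by simp [hvN]⟩

/-- The value of the (partially dominated) domination game on `G|S`, with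
`dom = true` meaning Dominator moves next, `dom = false` meaning Staller moves next.
A legal move is a vertex whose closed neighborhood contains a yet undominated vertex;
Dominator minimizes, Staller maximizes the total number of moves. -/
def gameVal (G : SimpleGraph V) [Fintype V] (dom : Bool) (S : Finset V) : ℕ :=
  let moves := Finset.univ.filter (fun x => ¬ closedNbr G x ⊆ S)
  if h : moves.Nonempty then
    if dom then
      moves.attach.inf' (by simpa using h)
        (fun x => 1 + gameVal G false (S ∪ closedNbr G x.1))
    else
      moves.attach.sup' (by simpa using h)
        (fun x => 1 + gameVal G true (S ∪ closedNbr G x.1))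
  else 0
termination_by (Finset.univ \ S).card
decreasing_by
  · exact card_compl_lt G (by simpa using (Finset.mem_filter.mp x.2).2)
  · exact card_compl_lt G (by simpa using (Finset.mem_filter.mp x.2).2)

/-- The D-game domination number `γ_g(G)`. -/
def gammaD (G : SimpleGraph V) [Fintype V] : ℕ := gameVal G true ∅

/-- The S-game domination number `γ_g'(G)`. -/
def gammaS (G : SimpleGraph V) [Fintype V] : ℕ := gameVal G false ∅

/-- Value of the Staller-pass domination game on `G|S`: Staller may skip
(at most) one move during the game; the skipped turn is not counted.
`dom` tells whose turn it is, `canPass` whether Staller's pass is still available. -/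
def spVal (G : SimpleGraph V) [Fintype V] (dom : Bool) (canPass : Bool) (S : Finset V) : ℕ :=
  let moves := Finset.univ.filter (fun x => ¬ closedNbr G x ⊆ S)
  if h : moves.Nonempty then
    if dom then
      moves.attach.inf' (by simpa using h)
        (fun x => 1 + spVal G false canPass (S ∪ closedNbr G x.1))
    else
      if hc : canPass then
        max (moves.attach.sup' (by simpa using h)
              (fun x => 1 + spVal G true canPass (S ∪ closedNbr G x.1)))
            (spVal G true false S)
      else
        moves.attach.sup' (by simpa using h)
          (fun x => 1 + spVal G true canPass (S ∪ closedNbr G x.1))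
  else 0
termination_by ((Finset.univ \ S).card, if canPass then 1 else 0)
decreasing_by
  · exact Prod.Lex.left _ _ (card_compl_lt G (by simpa using (Finset.mem_filter.mp x.2).2))
  · exact Prod.Lex.left _ _ (card_compl_lt G (by simpa using (Finset.mem_filter.mp x.2).2))
  · simp only [hc, if_true]
    exact Prod.Lex.right _ (by norm_num)
  · exact Prod.Lex.left _ _ (card_compl_lt G (by simpa using (Finset.mem_filter.mp x.2).2))

/-- Value of the Dominator-pass domination game on `G|S`: Dominator may skip
(at most) one move during the game; the skipped turn is not counted. -/
def dpVal (G : SimpleGraph V) [Fintype V] (dom : Bool) (canPass : Bool) (S : Finset V) : ℕ :=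
  let moves := Finset.univ.filter (fun x => ¬ closedNbr G x ⊆ S)
  if h : moves.Nonempty then
    if dom then
      if hc : canPass then
        min (moves.attach.inf' (by simpa using h)
              (fun x => 1 + dpVal G false canPass (S ∪ closedNbr G x.1)))
            (dpVal G false false S)
      else
        moves.attach.inf' (by simpa using h)
          (fun x => 1 + dpVal G false canPass (S ∪ closedNbr G x.1))
    else
      moves.attach.sup' (by simpa using h)
        (fun x => 1 + dpVal G true canPass (S ∪ closedNbr G x.1))
  else 0
termination_by ((Finset.univ \ S).card, if canPass then 1 else 0)
decreasing_by
  · exact Prod.Lex.left _ _ (card_compl_lt G (by simpa using (Finset.mem_filter.mp x.2).2))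
  · simp only [hc, if_true]
    exact Prod.Lex.right _ (by norm_num)
  · exact Prod.Lex.left _ _ (card_compl_lt G (by simpa using (Finset.mem_filter.mp x.2).2))
  · exact Prod.Lex.left _ _ (card_compl_lt G (by simpa using (Finset.mem_filter.mp x.2).2))

/-- The graph `G_{uv}`: obtained from `G - uv` by adding two new vertices
`u' = Sum.inr false` and `v' = Sum.inr true` together with the edges `u v'` and `v u'`. -/
def cutGraph (G : SimpleGraph V) (u v : V) : SimpleGraph (V ⊕ Bool) :=
  SimpleGraph.fromRel (fun x y =>
    match x, y with
    | Sum.inl a, Sum.inl b => G.Adj a b ∧ ¬ (a = u ∧ b = v) ∧ ¬ (a = v ∧ b = u)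
    | Sum.inl a, Sum.inr b => (b = false ∧ a = v) ∨ (b = true ∧ a = u)
    | _, _ => False)

/-- The set of vertices of `G_{uv}` declared dominated, given that `B ⊆ V(G)` is
declared dominated: `B` together with the two new vertices `u'` and `v'`. -/
def cutDom [DecidableEq V] (B : Finset V) : Finset (V ⊕ Bool) :=
  B.image Sum.inl ∪ {Sum.inr false, Sum.inr true}

/-- Disjoint union of two simple graphs. -/
def disjUnion {α β : Type*} (G : SimpleGraph α) (H : SimpleGraph β) :
    SimpleGraph (α ⊕ β) :=
  SimpleGraph.fromRel (fun x y =>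
    match x, y with
    | Sum.inl a, Sum.inl b => G.Adj a b
    | Sum.inr a, Sum.inr b => H.Adj a b
    | _, _ => False)

/-- The disjoint union of `k` paths, the `i`-th on `size i` vertices
(consecutive vertices of each `Fin (size i)` being adjacent). -/
def sigmaPathGraph (k : ℕ) (size : Fin k → ℕ) :
    SimpleGraph (Σ i : Fin k, Fin (size i)) :=
  SimpleGraph.fromRel (fun x y => x.1 = y.1 ∧ x.2.val + 1 = y.2.val)

/-- Vertex set of the three-legged spider `T_{p,q,r}`:
the center together with three legs on `4p`, `4q` and `4r` vertices. -/
abbrev SpiderV (p q r : ℕ) := Unit ⊕ (Fin (4*p) ⊕ (Fin (4*q) ⊕ Fin (4*r)))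

/-- The three-legged spider `T_{p,q,r}`, obtained from paths `P_{4p+1}`, `P_{4q+1}`,
`P_{4r+1}` by identifying one end-vertex of each into the center. In each leg,
vertex `0` is adjacent to the center, and vertices `i`, `i+1` are adjacent. -/
def spider (p q r : ℕ) : SimpleGraph (SpiderV p q r) :=
  SimpleGraph.fromRel (fun x y =>
    match x, y with
    | Sum.inl _, Sum.inr (Sum.inl i) => i.val = 0
    | Sum.inl _, Sum.inr (Sum.inr (Sum.inl i)) => i.val = 0
    | Sum.inl _, Sum.inr (Sum.inr (Sum.inr i)) => i.val = 0
    | Sum.inr (Sum.inl i), Sum.inr (Sum.inl j) => i.val + 1 = j.val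
    | Sum.inr (Sum.inr (Sum.inl i)), Sum.inr (Sum.inr (Sum.inl j)) => i.val + 1 = j.val
    | Sum.inr (Sum.inr (Sum.inr i)), Sum.inr (Sum.inr (Sum.inr j)) => i.val + 1 = j.val
    | _, _ => False)

/-- The weight `w(P'_{4q+r}) = w(P''_{4q+r}) = 2q + c_r` with
`c_0 = 0`, `c_1 = 1`, `c_2 = 3/2`, `c_3 = 7/4`, as a function of `n = 4q + r`. -/
def pathWeight (n : ℕ) : ℚ :=
  2 * (n / 4 : ℕ) +
    (if n % 4 = 0 then 0 else if n % 4 = 1 then 1 else if n % 4 = 2 then 3/2 else 7/4)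


section Helpers
variable {V : Type*} [Fintype V] (G : SimpleGraph V)

lemma gameVal_of_empty {S : Finset V}
    (h : ¬ (Finset.univ.filter (fun x => ¬ closedNbr G x ⊆ S)).Nonempty) (d : Bool) :
    gameVal G d S = 0 := by
  rw [gameVal]
  simp only [h, dif_neg, not_false_iff]

lemma gameVal_true_le {S : Finset V} {x : V} (hx : ¬ closedNbr G x ⊆ S) :
    gameVal G true S ≤ 1 + gameVal G false (S ∪ closedNbr G x) := by
  rw [gameVal]
  have hmem : x ∈ Finset.univ.filter (fun y => ¬ closedNbr G y ⊆ S) := by simp [hx]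
  have hne : (Finset.univ.filter (fun y => ¬ closedNbr G y ⊆ S)).Nonempty := ⟨x, hmem⟩
  simp only [hne, dif_pos, if_pos]
  exact Finset.inf'_le _ (Finset.mem_attach _ ⟨x, hmem⟩)

lemma gameVal_false_ge {S : Finset V} {x : V} (hx : ¬ closedNbr G x ⊆ S) :
    1 + gameVal G true (S ∪ closedNbr G x) ≤ gameVal G false S := by
  conv_rhs => rw [gameVal]
  have hmem : x ∈ Finset.univ.filter (fun y => ¬ closedNbr G y ⊆ S) := by simp [hx]
  have hne : (Finset.univ.filter (fun y => ¬ closedNbr G y ⊆ S)).Nonempty := ⟨x, hmem⟩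
  simp only [hne, dif_pos, Bool.false_eq_true, if_false]
  exact Finset.le_sup' (fun y => 1 + gameVal G true (S ∪ closedNbr G y.1))
    (Finset.mem_attach _ ⟨x, hmem⟩)

lemma gameVal_true_exists {S : Finset V}
    (h : (Finset.univ.filter (fun x => ¬ closedNbr G x ⊆ S)).Nonempty) :
    ∃ x, ¬ closedNbr G x ⊆ S ∧ gameVal G true S = 1 + gameVal G false (S ∪ closedNbr G x) := by
  rw [gameVal]
  simp only [h, dif_pos, if_pos]
  have h' : (Finset.univ.filter (fun z => ¬ closedNbr G z ⊆ S)).attach.Nonempty := by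
    simpa using h
  obtain ⟨x, hx, hval⟩ := Finset.exists_mem_eq_inf' h'
    (fun x => 1 + gameVal G false (S ∪ closedNbr G x.1))
  exact ⟨x.1, by simpa using (Finset.mem_filter.mp x.2).2, hval⟩

lemma gameVal_false_exists {S : Finset V}
    (h : (Finset.univ.filter (fun x => ¬ closedNbr G x ⊆ S)).Nonempty) :
    ∃ x, ¬ closedNbr G x ⊆ S ∧ gameVal G false S = 1 + gameVal G true (S ∪ closedNbr G x) := by
  rw [gameVal]
  simp only [h, dif_pos, Bool.false_eq_true, if_false]
  have h' : (Finset.univ.filter (fun z => ¬ closedNbr G z ⊆ S)).attach.Nonempty := by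
    simpa using h
  obtain ⟨x, hx, hval⟩ := Finset.exists_mem_eq_sup' h'
    (fun x => 1 + gameVal G true (S ∪ closedNbr G x.1))
  exact ⟨x.1, by simpa using (Finset.mem_filter.mp x.2).2, hval⟩

end Helpers

section Main
variable {V : Type*} [Fintype V]

lemma gameVal_mono (G : SimpleGraph V) (d : Bool) (S T : Finset V) (hST : S ⊆ T) :
    gameVal G d T ≤ gameVal G d S := by
  by_cases hT : (Finset.univ.filter (fun x => ¬ closedNbr G x ⊆ T)).Nonempty
  · cases d with
    | false =>
      obtain ⟨y, hy, hval⟩ := gameVal_false_exists G hT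
      have hyS : ¬ closedNbr G y ⊆ S := fun hs => hy (hs.trans hST)
      rw [hval]
      calc 1 + gameVal G true (T ∪ closedNbr G y)
          ≤ 1 + gameVal G true (S ∪ closedNbr G y) := by
            have := gameVal_mono G true (S ∪ closedNbr G y) (T ∪ closedNbr G y)
              (Finset.union_subset_union hST (le_refl _))
            omega
        _ ≤ gameVal G false S := gameVal_false_ge G hyS
    | true =>
      obtain ⟨y, hy⟩ := hT
      have hyT : ¬ closedNbr G y ⊆ T := by simpa using (Finset.mem_filter.mp hy).2
      have hyS : ¬ closedNbr G y ⊆ S := fun hs => hyT (hs.trans hST)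
      have hS : (Finset.univ.filter (fun x => ¬ closedNbr G x ⊆ S)).Nonempty :=
        ⟨y, by simp [hyS]⟩
      obtain ⟨x, hx, hval⟩ := gameVal_true_exists G hS
      by_cases hxT : closedNbr G x ⊆ T
      · calc gameVal G true T ≤ 1 + gameVal G false (T ∪ closedNbr G y) :=
              gameVal_true_le G hyT
          _ ≤ 1 + gameVal G false (S ∪ closedNbr G x) := by
              have := gameVal_mono G false (S ∪ closedNbr G x) (T ∪ closedNbr G y)
                (Finset.union_subset (hST.trans Finset.subset_union_left)
                  (hxT.trans Finset.subset_union_left))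
              omega
          _ = gameVal G true S := hval.symm
      · calc gameVal G true T ≤ 1 + gameVal G false (T ∪ closedNbr G x) :=
              gameVal_true_le G hxT
          _ ≤ 1 + gameVal G false (S ∪ closedNbr G x) := by
              have := gameVal_mono G false (S ∪ closedNbr G x) (T ∪ closedNbr G x)
                (Finset.union_subset_union hST (le_refl _))
              omega
          _ = gameVal G true S := hval.symm
  · rw [gameVal_of_empty G hT]
    exact Nat.zero_le _
termination_by (Finset.univ \ S).card
decreasing_by
  · exact card_compl_lt G hyS
  · exact card_compl_lt G hx
  · exact card_compl_lt G hx

lemma gameVal_false_le_true (G : SimpleGraph V) (S : Finset V) :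
    gameVal G false S ≤ gameVal G true S + 1 := by
  by_cases h : (Finset.univ.filter (fun x => ¬ closedNbr G x ⊆ S)).Nonempty
  · obtain ⟨x, hx, hval⟩ := gameVal_false_exists G h
    have := gameVal_mono G true S (S ∪ closedNbr G x) Finset.subset_union_left
    omega
  · rw [gameVal_of_empty G h]
    omega

lemma gameVal_true_le_false (G : SimpleGraph V) (S : Finset V) :
    gameVal G true S ≤ gameVal G false S + 1 := by
  by_cases h : (Finset.univ.filter (fun x => ¬ closedNbr G x ⊆ S)).Nonempty
  · obtain ⟨x, hx, hval⟩ := gameVal_false_exists G h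
    have h1 := gameVal_true_le G hx
    have h2 := gameVal_false_le_true G (S ∪ closedNbr G x)
    omega
  · rw [gameVal_of_empty G h]
    omega

end Main

/-- For every finite graph `G`, `|γ_g(G) − γ_g′(G)| ≤ 1`. -/
theorem game_numbers_differ_by_at_most_one {V : Type*} [Fintype V] (G : SimpleGraph V) :
    |(gammaD G : ℤ) - (gammaS G : ℤ)| ≤ 1 := by
  have h1 := gameVal_false_le_true G (∅ : Finset V)
  have h2 := gameVal_true_le_false G (∅ : Finset V)
  rw [gammaD, gammaS, abs_le]
  constructor <;> omega

end

end DomGame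
end

section
/- If G is a domination-game critical graph, then G is either a minus graph or an equal graph; that is, γ_g′(G) ≤ γ_g(G). -/
open Finset

namespace DomGame

open scoped Classical

noncomputable section

variable {V : Type*}

lemma gameVal_true_eq (G : SimpleGraph V) [Fintype V] {S : Finset V}
    (h : (Finset.univ.filter (fun x => ¬ closedNbr G x ⊆ S)).Nonempty) :
    gameVal G true S = (Finset.univ.filter (fun x => ¬ closedNbr G x ⊆ S)).attach.inf'
      (by simpa using h) (fun x => 1 + gameVal G false (S ∪ closedNbr G x.1)) := by
  rw [gameVal]; simp [h]

lemma gameVal_false_eq (G : SimpleGraph V) [Fintype V] {S : Finset V}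
    (h : (Finset.univ.filter (fun x => ¬ closedNbr G x ⊆ S)).Nonempty) :
    gameVal G false S = (Finset.univ.filter (fun x => ¬ closedNbr G x ⊆ S)).attach.sup'
      (by simpa using h) (fun x => 1 + gameVal G true (S ∪ closedNbr G x.1)) := by
  rw [gameVal]; simp [h]

lemma gameVal_eq_zero (G : SimpleGraph V) [Fintype V] {S : Finset V} (d : Bool)
    (h : ¬ (Finset.univ.filter (fun x => ¬ closedNbr G x ⊆ S)).Nonempty) :
    gameVal G d S = 0 := by
  rw [gameVal]; simp [h]

lemma compl_card_le (G : SimpleGraph V) [Fintype V] (S : Finset V) (x : V) :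
    (Finset.univ \ (S ∪ closedNbr G x)).card ≤ (Finset.univ \ S).card :=
  Finset.card_le_card (Finset.sdiff_subset_sdiff le_rfl Finset.subset_union_left)

/-- Continuation principle, with the two "pass" inequalities. -/
lemma contPrinciple (G : SimpleGraph V) [Fintype V] :
    ∀ n : ℕ, ∀ S T : Finset V, S ⊆ T →
      (Finset.univ \ S).card + (Finset.univ \ T).card ≤ n →
      gameVal G false T ≤ gameVal G false S ∧
      gameVal G true T ≤ gameVal G true S ∧
      gameVal G true T ≤ 1 + gameVal G false S ∧
      gameVal G false T ≤ 1 + gameVal G true S := by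
  intro n
  induction n using Nat.strong_induction_on with
  | _ n ih =>
  intro S T hST hn
  by_cases hT : (Finset.univ.filter (fun x => ¬ closedNbr G x ⊆ T)).Nonempty
  · have hMsub : (Finset.univ.filter (fun x => ¬ closedNbr G x ⊆ T)) ⊆
        (Finset.univ.filter (fun x => ¬ closedNbr G x ⊆ S)) := by
      intro x hx
      simp only [Finset.mem_filter, Finset.mem_univ, true_and] at hx ⊢
      exact fun hsub => hx (hsub.trans hST)
    have hS : (Finset.univ.filter (fun x => ¬ closedNbr G x ⊆ S)).Nonempty :=
      hT.mono hMsub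
    have hnpos : 1 ≤ n := by
      obtain ⟨x, hx⟩ := hT
      have hx' : ¬ closedNbr G x ⊆ T := by simpa using (Finset.mem_filter.mp hx).2
      have : 0 < (Finset.univ \ T).card := by
        obtain ⟨v, hvN, hvT⟩ := Finset.not_subset.mp hx'
        exact Finset.card_pos.mpr ⟨v, by simp [hvT]⟩
      omega
    refine ⟨?_, ?_, ?_, ?_⟩
    · -- false T ≤ false S
      rw [gameVal_false_eq G hT]
      apply Finset.sup'_le
      rintro ⟨x, hx⟩ -
      have hxS : x ∈ Finset.univ.filter (fun x => ¬ closedNbr G x ⊆ S) := hMsub hx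
      have hxS' : ¬ closedNbr G x ⊆ S := by simpa using (Finset.mem_filter.mp hxS).2
      have hlt : (Finset.univ \ (S ∪ closedNbr G x)).card < (Finset.univ \ S).card :=
        card_compl_lt G hxS'
      have hle2 := (ih (n-1) (by omega) (S ∪ closedNbr G x) (T ∪ closedNbr G x)
        (Finset.union_subset_union hST le_rfl)
        (by have := compl_card_le G T x; omega)).2.1
      calc 1 + gameVal G true (T ∪ closedNbr G x)
          ≤ 1 + gameVal G true (S ∪ closedNbr G x) := by omega
        _ ≤ gameVal G false S := by
            rw [gameVal_false_eq G hS]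
            exact Finset.le_sup' (fun x => 1 + gameVal G true (S ∪ closedNbr G x.1))
              (Finset.mem_attach _ ⟨x, hxS⟩)
    · -- true T ≤ true S
      obtain ⟨x₀, hx₀mem, hx₀eq⟩ := Finset.exists_mem_eq_inf'
        (by simpa using hS :
          (Finset.univ.filter (fun x => ¬ closedNbr G x ⊆ S)).attach.Nonempty)
        (fun x => 1 + gameVal G false (S ∪ closedNbr G x.1))
      have hx₀S : ¬ closedNbr G x₀.1 ⊆ S := by
        simpa using (Finset.mem_filter.mp x₀.2).2
      have hlt : (Finset.univ \ (S ∪ closedNbr G x₀.1)).card < (Finset.univ \ S).card :=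
        card_compl_lt G hx₀S
      rw [gameVal_true_eq G hS, hx₀eq]
      by_cases hx₀T : closedNbr G x₀.1 ⊆ T
      · -- use pass inequality at (S ∪ N, T)
        have h3 := (ih (n-1) (by omega) (S ∪ closedNbr G x₀.1) T
          (Finset.union_subset hST hx₀T) (by omega)).2.2.1
        omega
      · have hx₀Tmem : x₀.1 ∈ Finset.univ.filter (fun x => ¬ closedNbr G x ⊆ T) := by
          simp [hx₀T]
        have h1 := (ih (n-1) (by omega) (S ∪ closedNbr G x₀.1) (T ∪ closedNbr G x₀.1)
          (Finset.union_subset_union hST le_rfl)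
          (by have := compl_card_le G T x₀.1; omega)).1
        have : gameVal G true T ≤ 1 + gameVal G false (T ∪ closedNbr G x₀.1) := by
          rw [gameVal_true_eq G hT]
          exact Finset.inf'_le _ (Finset.mem_attach _ ⟨x₀.1, hx₀Tmem⟩)
        omega
    · -- true T ≤ 1 + false S
      obtain ⟨x, hx⟩ := id hT
      have hxT : ¬ closedNbr G x ⊆ T := by simpa using (Finset.mem_filter.mp hx).2
      have hxS : x ∈ Finset.univ.filter (fun x => ¬ closedNbr G x ⊆ S) := hMsub hx
      have hxS' : ¬ closedNbr G x ⊆ S := by simpa using (Finset.mem_filter.mp hxS).2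
      have hlt : (Finset.univ \ (S ∪ closedNbr G x)).card < (Finset.univ \ S).card :=
        card_compl_lt G hxS'
      have h4 := (ih (n-1) (by omega) (S ∪ closedNbr G x) (T ∪ closedNbr G x)
        (Finset.union_subset_union hST le_rfl)
        (by have := compl_card_le G T x; omega)).2.2.2
      have hTle : gameVal G true T ≤ 1 + gameVal G false (T ∪ closedNbr G x) := by
        rw [gameVal_true_eq G hT]
        exact Finset.inf'_le _ (Finset.mem_attach _ ⟨x, hx⟩)
      have hSge : 1 + gameVal G true (S ∪ closedNbr G x) ≤ gameVal G false S := by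
        rw [gameVal_false_eq G hS]
        exact Finset.le_sup' (fun x => 1 + gameVal G true (S ∪ closedNbr G x.1))
          (Finset.mem_attach _ ⟨x, hxS⟩)
      omega
    · -- false T ≤ 1 + true S
      rw [gameVal_false_eq G hT]
      apply Finset.sup'_le
      rintro ⟨x, hx⟩ -
      have hxT : ¬ closedNbr G x ⊆ T := by simpa using (Finset.mem_filter.mp hx).2
      have hlt : (Finset.univ \ (T ∪ closedNbr G x)).card < (Finset.univ \ T).card :=
        card_compl_lt G hxT
      have h2 := (ih (n-1) (by omega) S (T ∪ closedNbr G x)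
        (hST.trans Finset.subset_union_left) (by omega)).2.1
      show 1 + gameVal G true (T ∪ closedNbr G x) ≤ 1 + gameVal G true S
      omega
  · simp [gameVal_eq_zero G _ hT]

/-- If `G` is domination-game critical, then `G` is a minus or an equal graph,
i.e. `γ_g′(G) ≤ γ_g(G)`. -/
theorem critical_not_plus {V : Type*} [Fintype V] (G : SimpleGraph V)
    (hcrit : ∀ v : V, gameVal G true {v} < gammaD G) :
    gammaS G ≤ gammaD G := by
  unfold gammaS
  by_cases h : (Finset.univ.filter (fun x => ¬ closedNbr G x ⊆ (∅ : Finset V))).Nonempty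
  · rw [gameVal_false_eq G h]
    apply Finset.sup'_le
    rintro ⟨x, hx⟩ -
    have hsub : ({x} : Finset V) ⊆ closedNbr G x := by
      intro y hy
      simp only [Finset.mem_singleton] at hy
      simp [closedNbr, hy]
    have := (contPrinciple G ((Finset.univ \ ({x} : Finset V)).card +
        (Finset.univ \ closedNbr G x).card) {x} (closedNbr G x) hsub le_rfl).2.1
    have hcx := hcrit x
    simp only [Finset.empty_union]
    omega
  · rw [gameVal_eq_zero G _ h]
    exact Nat.zero_le _


end

end DomGame
end

section
/- For all n ≥ 0, γ_g(P′_n) = γ_g(P″_n) = ⌈n/2⌉ − 1 if n ≡ 3 (mod 4), and ⌈n/2⌉ otherwise. -/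
open Finset

namespace DomGame

open scoped Classical

noncomputable section

variable {V : Type*}

def dd (k : ℕ) : ℕ := if k % 4 = 0 then 0 else if k % 4 = 1 then 2 else if k % 4 = 2 then 2 else 1
def qq (k : ℕ) : ℕ := 2 * k + dd k

lemma dd_cases (k : ℕ) : (k%4 = 0 ∧ dd k = 0) ∨ (k%4 = 1 ∧ dd k = 2) ∨ (k%4 = 2 ∧ dd k = 2)
    ∨ (k%4 = 3 ∧ dd k = 1) := by
  unfold dd
  rcases (by omega : k%4 = 0 ∨ k%4 = 1 ∨ k%4 = 2 ∨ k%4 = 3) with h|h|h|h <;> simp [h]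

lemma qq_zero : qq 0 = 0 := by simp [qq, dd]
lemma qq_one : qq 1 = 4 := by simp [qq, dd]

lemma drop1 (k : ℕ) : ∃ δ, qq k + δ = qq (k+1) ∧ 1 ≤ δ ∧ δ ≤ 4 := by
  rcases dd_cases k with ⟨h1,h2⟩|⟨h1,h2⟩|⟨h1,h2⟩|⟨h1,h2⟩ <;>
    rcases dd_cases (k+1) with ⟨g1,g2⟩|⟨g1,g2⟩|⟨g1,g2⟩|⟨g1,g2⟩ <;>
    exact ⟨qq (k+1) - qq k, by simp only [qq] at *; omega⟩

lemma drop2 (k : ℕ) : ∃ δ, qq k + δ = qq (k+2) ∧ 2 ≤ δ ∧ δ ≤ 6 := by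
  rcases dd_cases k with ⟨h1,h2⟩|⟨h1,h2⟩|⟨h1,h2⟩|⟨h1,h2⟩ <;>
    rcases dd_cases (k+2) with ⟨g1,g2⟩|⟨g1,g2⟩|⟨g1,g2⟩|⟨g1,g2⟩ <;>
    exact ⟨qq (k+2) - qq k, by simp only [qq] at *; omega⟩

lemma dropSplit (a b : ℕ) : ∃ δ, qq a + qq b + δ = qq (a+b+3) ∧ 2 ≤ δ ∧ δ ≤ 7 := by
  rcases dd_cases a with ⟨h1,h2⟩|⟨h1,h2⟩|⟨h1,h2⟩|⟨h1,h2⟩ <;>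
    rcases dd_cases b with ⟨i1,i2⟩|⟨i1,i2⟩|⟨i1,i2⟩|⟨i1,i2⟩ <;>
    rcases dd_cases (a+b+3) with ⟨g1,g2⟩|⟨g1,g2⟩|⟨g1,g2⟩|⟨g1,g2⟩ <;>
    exact ⟨qq (a+b+3) - qq a - qq b, by simp only [qq] at *; omega⟩

/-- Exact drop values for the (k+1) → k move, per residue of the shrinking run. -/
lemma dv1 (k : ℕ) : (k % 4 = 0 → qq k + 4 = qq (k+1)) ∧ (k % 4 = 1 → qq k + 2 = qq (k+1)) ∧
    (k % 4 = 2 → qq k + 1 = qq (k+1)) ∧ (k % 4 = 3 → qq k + 1 = qq (k+1)) := by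
  rcases dd_cases k with ⟨h1,h2⟩|⟨h1,h2⟩|⟨h1,h2⟩|⟨h1,h2⟩ <;>
    rcases dd_cases (k+1) with ⟨g1,g2⟩|⟨g1,g2⟩|⟨g1,g2⟩|⟨g1,g2⟩ <;>
    (refine ⟨?_, ?_, ?_, ?_⟩ <;> intro h <;> simp only [qq] <;> omega)

lemma dv2 (k : ℕ) : k % 4 = 0 → qq k + 6 = qq (k+2) := by
  rcases dd_cases k with ⟨h1,h2⟩|⟨h1,h2⟩|⟨h1,h2⟩|⟨h1,h2⟩ <;>
    rcases dd_cases (k+2) with ⟨g1,g2⟩|⟨g1,g2⟩|⟨g1,g2⟩|⟨g1,g2⟩ <;>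
    (intro h; simp only [qq]; omega)

lemma dv3 (k : ℕ) : k % 4 = 0 → qq k + qq 0 + 7 = qq (k+3) := by
  rcases dd_cases k with ⟨h1,h2⟩|⟨h1,h2⟩|⟨h1,h2⟩|⟨h1,h2⟩ <;>
    rcases dd_cases (k+3) with ⟨g1,g2⟩|⟨g1,g2⟩|⟨g1,g2⟩|⟨g1,g2⟩ <;>
    (intro h; simp only [qq, show dd 0 = 0 from rfl]; omega)

lemma dv4 (k : ℕ) : k % 4 = 0 → qq k + qq 1 + 4 = qq (k+4) := by
  rcases dd_cases k with ⟨h1,h2⟩|⟨h1,h2⟩|⟨h1,h2⟩|⟨h1,h2⟩ <;>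
    rcases dd_cases (k+4) with ⟨g1,g2⟩|⟨g1,g2⟩|⟨g1,g2⟩|⟨g1,g2⟩ <;>
    (intro h; simp only [qq, show dd 1 = 2 from rfl]; omega)

lemma qq_mod (k : ℕ) : (k % 4 = 0 → qq k % 4 = 0) ∧ (k % 4 = 1 → qq k % 4 = 0) ∧
    (k % 4 = 2 → qq k % 4 = 2) ∧ (k % 4 = 3 → qq k % 4 = 3) := by
  rcases dd_cases k with ⟨h1,h2⟩|⟨h1,h2⟩|⟨h1,h2⟩|⟨h1,h2⟩ <;>
    (refine ⟨?_, ?_, ?_, ?_⟩ <;> intro h <;> simp only [qq] <;> omega)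

lemma qq_pos (k : ℕ) (h : 1 ≤ k) : 1 ≤ qq k := by simp only [qq]; omega




def trues (t : ℕ) : List Bool := List.replicate t true
def falses (k : ℕ) : List Bool := List.replicate k false

lemma trues_succ (t : ℕ) : trues (t+1) = true :: trues t := rfl
lemma falses_succ (k : ℕ) : falses (k+1) = false :: falses k := rfl
lemma trues_add (a b : ℕ) : trues (a+b) = trues a ++ trues b :=
  List.replicate_add a b true

def qaux : ℕ → List Bool → ℕ
  | k, [] => qq k
  | k, true :: l => qq k + qaux 0 l
  | k, false :: l => qaux (k+1) l

def Qv (l : List Bool) : ℕ := qaux 0 l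

def headOk (l : List Bool) : Prop := l = [] ∨ ∃ l', l = true :: l'

lemma qaux_true_cons (k : ℕ) (l : List Bool) : qaux k (true :: l) = qq k + Qv l := rfl
lemma qaux_false_cons (k : ℕ) (l : List Bool) : qaux k (false :: l) = qaux (k+1) l := rfl

lemma Qv_trues_append (t : ℕ) (l : List Bool) : Qv (trues t ++ l) = Qv l := by
  induction t with
  | zero => rfl
  | succ t ih =>
    rw [trues_succ, List.cons_append]
    show qaux 0 (true :: (trues t ++ l)) = Qv l
    rw [qaux_true_cons, qq_zero, ih]; ring

lemma qaux_falses_append (j : ℕ) (l : List Bool) : ∀ k, qaux k (falses j ++ l) = qaux (k+j) l := by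
  induction j with
  | zero => intro k; rfl
  | succ j ih =>
    intro k
    rw [falses_succ, List.cons_append, qaux_false_cons, ih]
    congr 1; omega

lemma Qv_nil : Qv [] = 0 := qq_zero

lemma qaux_flush (k : ℕ) {l : List Bool} (h : headOk l) : qaux k l = qq k + Qv l := by
  rcases h with h | ⟨l', h⟩ <;> subst h
  · show qq k = qq k + Qv []
    rw [Qv_nil, Nat.add_zero]
  · show qq k + Qv l' = qq k + Qv (true :: l')
    have : Qv (true :: l') = qq 0 + Qv l' := rfl
    rw [this, qq_zero]; ring

lemma qaux_trues (k t : ℕ) : qaux k (trues t) = qq k := by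
  cases t with
  | zero => rfl
  | succ t =>
    rw [trues_succ, qaux_true_cons]
    have : Qv (trues t) = 0 := by
      have h2 := Qv_trues_append t []
      rw [List.append_nil] at h2
      rw [h2, Qv_nil]
    rw [this, Nat.add_zero]

lemma Qv_trues (t : ℕ) : Qv (trues t) = 0 := by
  have := qaux_trues 0 t; simpa [Qv, qq_zero] using this

lemma headOk_trues_append {t : ℕ} (h : 1 ≤ t) (l : List Bool) : headOk (trues t ++ l) := by
  obtain ⟨t', rfl⟩ : ∃ t', t = t' + 1 := ⟨t - 1, by omega⟩
  exact Or.inr ⟨trues t' ++ l, by rw [trues_succ, List.cons_append]⟩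

/-- Q-value of a canonical segment decomposition. -/
lemma Qv_shape (t k : ℕ) {rest : List Bool} (h : headOk rest) :
    Qv (trues t ++ (falses k ++ rest)) = qq k + Qv rest := by
  rw [Qv_trues_append]
  show qaux 0 (falses k ++ rest) = _
  rw [qaux_falses_append, qaux_flush _ h]
  norm_num

/-- The move operator: `dmw c l` declares positions `j` with `j ≤ c ∧ c ≤ j+2` dominated
(i.e. the closed neighbourhood of vertex `c-1`). -/
def dmw : ℕ → List Bool → List Bool
  | _, [] => []
  | 0, _ :: l => true :: l
  | (c+1), b :: l => (b || decide (c ≤ 1)) :: dmw c l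

lemma dmw_nil (c : ℕ) : dmw c [] = [] := by cases c <;> rfl
lemma dmw_zero_cons (b : Bool) (l : List Bool) : dmw 0 (b :: l) = true :: l := rfl
lemma dmw_succ_cons (c : ℕ) (b : Bool) (l : List Bool) :
    dmw (c+1) (b :: l) = (b || decide (c ≤ 1)) :: dmw c l := rfl

lemma dmw_length (c : ℕ) (l : List Bool) : (dmw c l).length = l.length := by
  induction l generalizing c with
  | nil => rw [dmw_nil]
  | cons b l ih =>
    cases c with
    | zero => simp [dmw_zero_cons]
    | succ c => simp [dmw_succ_cons, ih]

lemma dmw_getElem (c : ℕ) (l : List Bool) (j : ℕ) (h : j < l.length) :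
    (dmw c l)[j]'(by rw [dmw_length]; exact h) = (l[j] || decide (j ≤ c ∧ c ≤ j + 2)) := by
  induction l generalizing c j with
  | nil => simp at h
  | cons b l ih =>
    cases c with
    | zero =>
      simp only [dmw_zero_cons]
      cases j with
      | zero => simp
      | succ j => simp
    | succ c =>
      simp only [dmw_succ_cons]
      cases j with
      | zero =>
        simp only [List.getElem_cons_zero]
        congr 1
        simp
      | succ j =>
        simp only [List.getElem_cons_succ]
        rw [ih c j (by simpa using h)]
        congr 1
        simp

lemma dmw_trues_all (c t : ℕ) : dmw c (trues t) = trues t := by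
  induction t generalizing c with
  | zero => exact dmw_nil c
  | succ t ih =>
    rw [trues_succ]
    cases c with
    | zero => rfl
    | succ c => rw [dmw_succ_cons, ih]; simp

lemma dmw_zero_headOk {l : List Bool} (h : headOk l) : dmw 0 l = l := by
  rcases h with rfl | ⟨l', rfl⟩ <;> rfl

lemma dmw_trues_lt {t c : ℕ} (h : c < t) (l : List Bool) :
    dmw c (trues t ++ l) = trues t ++ l := by
  induction t generalizing c with
  | zero => omega
  | succ t ih =>
    rw [trues_succ, List.cons_append]
    cases c with
    | zero => rfl
    | succ c => rw [dmw_succ_cons, ih (by omega)]; simp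

lemma dmw_trues_ge {t c : ℕ} (h : t ≤ c) (l : List Bool) :
    dmw c (trues t ++ l) = trues t ++ dmw (c - t) l := by
  induction t generalizing c with
  | zero =>
    show dmw c ([] ++ l) = [] ++ dmw (c - 0) l
    rw [Nat.sub_zero, List.nil_append, List.nil_append]
  | succ t ih =>
    rw [trues_succ, List.cons_append]
    obtain ⟨c', rfl⟩ : ∃ c', c = c' + 1 := ⟨c - 1, by omega⟩
    rw [dmw_succ_cons, ih (by omega)]
    simp only [Bool.true_or]
    have hc : c' - t = c' + 1 - (t + 1) := by omega
    rw [hc]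
    rfl

lemma dmw_falses_ge {k c : ℕ} (h : k + 2 ≤ c) (l : List Bool) :
    dmw c (falses k ++ l) = falses k ++ dmw (c - k) l := by
  induction k generalizing c with
  | zero =>
    show dmw c ([] ++ l) = [] ++ dmw (c - 0) l
    rw [Nat.sub_zero, List.nil_append, List.nil_append]
  | succ k ih =>
    rw [falses_succ, List.cons_append]
    obtain ⟨c', rfl⟩ : ∃ c', c = c' + 1 := ⟨c - 1, by omega⟩
    rw [dmw_succ_cons, ih (by omega)]
    have : ¬ (c' ≤ 1) := by omega
    simp only [this, decide_false, Bool.or_false]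
    have hc : c' - k = c' + 1 - (k + 1) := by omega
    rw [hc]
    rfl

-- shape computations
lemma C0 (k : ℕ) (l : List Bool) :
    dmw 0 (falses (k+1) ++ l) = trues 1 ++ (falses k ++ l) := rfl

lemma C1a (k : ℕ) (l : List Bool) :
    dmw 1 (falses (k+2) ++ l) = trues 2 ++ (falses k ++ l) := rfl

lemma C1b {l : List Bool} (h : headOk l) : dmw 1 (falses 1 ++ l) = trues 1 ++ l := by
  show dmw 1 (false :: l) = true :: l
  rw [dmw_succ_cons, dmw_zero_headOk h]
  rfl

lemma Csplit (a b : ℕ) (l : List Bool) :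
    dmw (a+2) (falses (a+3+b) ++ l) = falses a ++ (trues 3 ++ (falses b ++ l)) := by
  induction a with
  | zero =>
    rw [show (0:ℕ)+3+b = b+3 by omega, show (0:ℕ)+2 = 2 by omega]
    rfl
  | succ a ih =>
    have h1 : falses (a+1+3+b) ++ l = false :: (falses (a+3+b) ++ l) := by
      rw [show a+1+3+b = (a+3+b)+1 by ring, falses_succ]; rfl
    rw [h1, dmw_succ_cons, ih]
    have : ¬ (a + 2 ≤ 1) := by omega
    simp only [this, decide_false, Bool.or_false]
    rfl

lemma Cend (k : ℕ) {l : List Bool} (h : headOk l) :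
    dmw (k+2) (falses (k+2) ++ l) = falses k ++ (trues 2 ++ l) := by
  induction k with
  | zero =>
    show dmw 2 (false :: false :: l) = true :: true :: l
    rw [dmw_succ_cons, dmw_succ_cons, dmw_zero_headOk h]
    rfl
  | succ k ih =>
    have h1 : falses (k+1+2) ++ l = false :: (falses (k+2) ++ l) := rfl
    rw [h1, dmw_succ_cons, ih]
    have : ¬ (k + 2 ≤ 1) := by omega
    simp only [this, decide_false, Bool.or_false]
    rfl

lemma Cflank (k : ℕ) {l : List Bool} (h : dmw 1 l = l) :
    dmw (k+2) (falses (k+1) ++ l) = falses k ++ (trues 1 ++ l) := by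
  induction k with
  | zero =>
    show dmw 2 (false :: l) = true :: l
    rw [dmw_succ_cons, h]
    rfl
  | succ k ih =>
    have h1 : falses (k+1+1) ++ l = false :: (falses (k+1) ++ l) := rfl
    rw [h1, dmw_succ_cons, ih]
    have : ¬ (k + 2 ≤ 1) := by omega
    simp only [this, decide_false, Bool.or_false]
    rfl

lemma headOk_dmw (c : ℕ) {l : List Bool} (h : headOk l) : headOk (dmw c l) := by
  rcases h with rfl | ⟨l', rfl⟩
  · rw [dmw_nil]; exact Or.inl rfl
  · cases c with
    | zero => exact Or.inr ⟨l', rfl⟩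
    | succ c => exact Or.inr ⟨dmw c l', by rw [dmw_succ_cons]; simp⟩



inductive NTl : List Bool → Prop
  | nil : NTl []
  | fin (s : ℕ) : NTl (trues s)
  | cons (s k : ℕ) {rest : List Bool} (hs : 3 ≤ s) (hk : 1 ≤ k) (h : NTl rest) :
      NTl (trues s ++ (falses k ++ rest))

def Nice (l : List Bool) : Prop :=
  (∃ t, l = trues t) ∨
    ∃ t k rest, 1 ≤ t ∧ 1 ≤ k ∧ NTl rest ∧ l = trues t ++ (falses k ++ rest)

lemma NTl_headOk {l : List Bool} (h : NTl l) : headOk l := by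
  induction h with
  | nil => exact Or.inl rfl
  | fin s =>
    cases s with
    | zero => exact Or.inl rfl
    | succ s => exact Or.inr ⟨trues s, trues_succ s⟩
  | cons s k hs hk h ih =>
    exact headOk_trues_append (by omega) _

lemma NTl_glue (u : ℕ) {l : List Bool} (h : NTl l) : NTl (trues u ++ l) := by
  induction h with
  | nil => rw [List.append_nil]; exact NTl.fin u
  | fin s => rw [← trues_add]; exact NTl.fin (u+s)
  | cons s k hs hk h ih =>
    rw [← List.append_assoc, ← trues_add]
    exact NTl.cons (u+s) k (by omega) hk h

lemma NTl_Nice {l : List Bool} (h : NTl l) : Nice l := by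
  induction h with
  | nil => exact Or.inl ⟨0, rfl⟩
  | fin s => exact Or.inl ⟨s, rfl⟩
  | cons s k hs hk h ih => exact Or.inr ⟨s, k, _, by omega, hk, h, rfl⟩

lemma Nice_mk (t k : ℕ) {rest : List Bool} (ht : 1 ≤ t) (h : NTl rest) :
    Nice (trues t ++ (falses k ++ rest)) := by
  cases k with
  | zero => exact NTl_Nice (NTl_glue t h)
  | succ k => exact Or.inr ⟨t, k+1, rest, ht, by omega, h, rfl⟩

lemma NTl_mk (t k : ℕ) {rest : List Bool} (ht : 3 ≤ t) (h : NTl rest) :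
    NTl (trues t ++ (falses k ++ rest)) := by
  cases k with
  | zero => exact NTl_glue t h
  | succ k => exact NTl.cons t (k+1) ht (by omega) h

lemma NTl_dmw_le2 {l : List Bool} (h : NTl l) {c : ℕ} (hc : c ≤ 2) : dmw c l = l := by
  induction h with
  | nil => exact dmw_nil c
  | fin s => exact dmw_trues_all c s
  | cons s k hs hk h ih => exact dmw_trues_lt (by omega) _

lemma Qv_fshape (k : ℕ) {rest : List Bool} (h : headOk rest) :
    Qv (falses k ++ rest) = qq k + Qv rest := by
  have := Qv_shape 0 k h
  simpa [trues] using this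

def Out (orig X : List Bool) : Prop :=
  X = orig ∨ ((∀ t, 1 ≤ t → Nice (trues t ++ X)) ∧ (∀ t, 3 ≤ t → NTl (trues t ++ X)) ∧
    ∃ δ, 1 ≤ δ ∧ δ ≤ 7 ∧ Qv X + δ = Qv orig)

lemma core (k : ℕ) {rest : List Bool} (hk : 1 ≤ k) (hrest : NTl rest)
    (IH : ∀ c, dmw c rest = rest ∨
      (NTl (dmw c rest) ∧ ∃ δ, 1 ≤ δ ∧ δ ≤ 7 ∧ Qv (dmw c rest) + δ = Qv rest)) :
    ∀ c, Out (falses k ++ rest) (dmw c (falses k ++ rest)) := by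
  intro c
  have hho := NTl_headOk hrest
  match c with
  | 0 =>
    obtain ⟨k', rfl⟩ : ∃ k', k = k' + 1 := ⟨k - 1, by omega⟩
    rw [C0]
    refine Or.inr ⟨?_, ?_, ?_⟩
    · intro t ht
      rw [← List.append_assoc, ← trues_add]
      exact Nice_mk (t+1) k' (by omega) hrest
    · intro t ht
      rw [← List.append_assoc, ← trues_add]
      exact NTl_mk (t+1) k' (by omega) hrest
    · obtain ⟨δ, hδ, h1, h4⟩ := drop1 k'
      exact ⟨δ, h1, by omega, by rw [Qv_shape 1 k' hho, Qv_fshape _ hho]; omega⟩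
  | 1 =>
    match k, hk with
    | 1, _ =>
      rw [C1b hho]
      refine Or.inr ⟨?_, ?_, ?_⟩
      · intro t ht
        rw [← List.append_assoc, ← trues_add]
        exact NTl_Nice (NTl_glue (t+1) hrest)
      · intro t ht
        rw [← List.append_assoc, ← trues_add]
        exact NTl_glue (t+1) hrest
      · refine ⟨4, by omega, by omega, ?_⟩
        rw [Qv_trues_append, Qv_fshape _ hho, qq_one]
        omega
    | (k''+2), _ =>
      rw [C1a]
      refine Or.inr ⟨?_, ?_, ?_⟩
      · intro t ht
        rw [← List.append_assoc, ← trues_add]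
        exact Nice_mk (t+2) k'' (by omega) hrest
      · intro t ht
        rw [← List.append_assoc, ← trues_add]
        exact NTl_mk (t+2) k'' (by omega) hrest
      · obtain ⟨δ, hδ, h1, h4⟩ := drop2 k''
        exact ⟨δ, by omega, by omega, by rw [Qv_shape 2 k'' hho, Qv_fshape _ hho]; omega⟩
  | (c''+2) =>
    by_cases hik : c'' + 3 ≤ k
    · -- interior split
      obtain ⟨b, rfl⟩ : ∃ b, k = c'' + 3 + b := ⟨k - c'' - 3, by omega⟩
      rw [Csplit]
      have hR : NTl (trues 3 ++ (falses b ++ rest)) := NTl_mk 3 b (by omega) hrest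
      have hRho : headOk (trues 3 ++ (falses b ++ rest)) := headOk_trues_append (by omega) _
      refine Or.inr ⟨fun t ht => Nice_mk t c'' ht hR, fun t ht => NTl_mk t c'' ht hR, ?_⟩
      obtain ⟨δ, hδ, h1, h4⟩ := dropSplit c'' b
      refine ⟨δ, by omega, by omega, ?_⟩
      rw [Qv_fshape _ hRho, Qv_shape 3 b hho, Qv_fshape _ hho,
        show c'' + 3 + b = c'' + b + 3 by ring]
      omega
    · by_cases hek : c'' + 2 = k
      · -- eats the right end of the run (plus right flank cell)
        obtain rfl : k = c'' + 2 := hek.symm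
        rw [Cend c'' hho]
        have hR : NTl (trues 2 ++ rest) := NTl_glue 2 hrest
        have hRho : headOk (trues 2 ++ rest) := headOk_trues_append (by omega) _
        refine Or.inr ⟨fun t ht => Nice_mk t c'' ht hR, fun t ht => NTl_mk t c'' ht hR, ?_⟩
        obtain ⟨δ, hδ, h1, h4⟩ := drop2 c''
        refine ⟨δ, by omega, by omega, ?_⟩
        rw [Qv_fshape _ hRho, Qv_trues_append, Qv_fshape _ hho]
        omega
      · by_cases hfk : c'' + 1 = k
        · -- plays the right flank vertex
          obtain rfl : k = c'' + 1 := hfk.symm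
          rw [Cflank c'' (NTl_dmw_le2 hrest (by omega))]
          have hR : NTl (trues 1 ++ rest) := NTl_glue 1 hrest
          have hRho : headOk (trues 1 ++ rest) := headOk_trues_append (by omega) _
          refine Or.inr ⟨fun t ht => Nice_mk t c'' ht hR, fun t ht => NTl_mk t c'' ht hR, ?_⟩
          obtain ⟨δ, hδ, h1, h4⟩ := drop1 c''
          refine ⟨δ, by omega, by omega, ?_⟩
          rw [Qv_fshape _ hRho, Qv_trues_append, Qv_fshape _ hho]
          omega
        · -- the move is beyond this run
          rw [dmw_falses_ge (by omega)]
          rcases IH (c''+2-k) with h | ⟨hN, δ, h1, h7, hQ⟩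
          · rw [h]; exact Or.inl rfl
          · have hYho : headOk (dmw (c''+2-k) rest) := headOk_dmw _ hho
            refine Or.inr ⟨fun t ht => Nice_mk t k ht hN, fun t ht => NTl_mk t k ht hN, ?_⟩
            refine ⟨δ, h1, h7, ?_⟩
            rw [Qv_fshape _ hYho, Qv_fshape _ hho]
            omega

lemma move_NT {l : List Bool} (h : NTl l) : ∀ c, dmw c l = l ∨
    (NTl (dmw c l) ∧ ∃ δ, 1 ≤ δ ∧ δ ≤ 7 ∧ Qv (dmw c l) + δ = Qv l) := by
  induction h with
  | nil => intro c; rw [dmw_nil]; exact Or.inl rfl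
  | fin s => intro c; rw [dmw_trues_all]; exact Or.inl rfl
  | cons s k hs hk h ih =>
    intro c
    by_cases hc : c < s
    · rw [dmw_trues_lt hc]; exact Or.inl rfl
    · rw [dmw_trues_ge (by omega)]
      rcases core k hk h ih (c - s) with e | ⟨hN, hT, δ, h1, h7, hQ⟩
      · rw [e]; exact Or.inl rfl
      · refine Or.inr ⟨hT s hs, δ, h1, h7, ?_⟩
        rw [Qv_trues_append, Qv_trues_append]
        exact hQ

lemma move_all {l : List Bool} (h : Nice l) : ∀ c, dmw c l = l ∨
    (Nice (dmw c l) ∧ ∃ δ, 1 ≤ δ ∧ δ ≤ 7 ∧ Qv (dmw c l) + δ = Qv l) := by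
  rcases h with ⟨t, rfl⟩ | ⟨t, k, rest, ht, hk, hrest, rfl⟩
  · intro c; rw [dmw_trues_all]; exact Or.inl rfl
  · intro c
    by_cases hc : c < t
    · rw [dmw_trues_lt hc]; exact Or.inl rfl
    · rw [dmw_trues_ge (by omega)]
      rcases core k hk hrest (move_NT hrest) (c - t) with e | ⟨hN, hT, δ, h1, h7, hQ⟩
      · rw [e]; exact Or.inl rfl
      · refine Or.inr ⟨hN t ht, δ, h1, h7, ?_⟩
        rw [Qv_trues_append, Qv_trues_append]
        exact hQ

def DropOf (k δ : ℕ) : Prop :=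
  (qq (k-1) + δ = qq k) ∨ (qq (k-2) + δ = qq k) ∨ (∃ a b, a + b + 3 = k ∧ qq a + qq b + δ = qq k)

lemma DropOf3 {k : ℕ} (h : k % 4 = 3) : DropOf k 7 ∧ DropOf k 1 := by
  constructor
  · refine Or.inr (Or.inr ⟨k-3, 0, by omega, ?_⟩)
    have := dv3 (k-3) (by omega)
    rw [show k-3+3 = k by omega] at this
    simpa [qq_zero] using this
  · refine Or.inl ?_
    have := (dv1 (k-1)).2.2.1 (by omega)
    rwa [show k-1+1 = k by omega] at this

lemma DropOf2 {k : ℕ} (h : k % 4 = 2) : DropOf k 6 ∧ DropOf k 2 := by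
  constructor
  · refine Or.inr (Or.inl ?_)
    have := dv2 (k-2) (by omega)
    rwa [show k-2+2 = k by omega] at this
  · refine Or.inl ?_
    have := (dv1 (k-1)).2.1 (by omega)
    rwa [show k-1+1 = k by omega] at this

lemma DropOf1 {k : ℕ} (h : k % 4 = 1) : DropOf k 4 := by
  refine Or.inl ?_
  have := (dv1 (k-1)).1 (by omega)
  rwa [show k-1+1 = k by omega] at this

lemma DropOf0 {k : ℕ} (h : k % 4 = 0) (hk : 1 ≤ k) : DropOf k 4 ∧ DropOf k 1 := by
  constructor
  · refine Or.inr (Or.inr ⟨k-4, 1, by omega, ?_⟩)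
    have := dv4 (k-4) (by omega)
    rwa [show k-4+4 = k by omega] at this
  · refine Or.inl ?_
    have := (dv1 (k-1)).2.2.2 (by omega)
    rwa [show k-1+1 = k by omega] at this

lemma len_shape (t k : ℕ) (rest : List Bool) :
    (trues t ++ (falses k ++ rest)).length = t + k + rest.length := by
  simp [trues, falses]; ring

lemma realize_first (t k : ℕ) {rest : List Bool} (ht : 1 ≤ t) (hk : 1 ≤ k) (h : NTl rest) :
    ∀ δ, DropOf k δ → ∃ c, t ≤ c ∧ c ≤ t + k ∧
      Qv (dmw c (trues t ++ (falses k ++ rest))) + δ = Qv (trues t ++ (falses k ++ rest)) := by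
  have hho := NTl_headOk h
  intro δ hδ
  rcases hδ with hδ | hδ | ⟨a, b, hab, hδ⟩
  · refine ⟨t, le_refl t, by omega, ?_⟩
    rw [dmw_trues_ge (le_refl t), Nat.sub_self]
    obtain ⟨k', rfl⟩ : ∃ k', k = k' + 1 := ⟨k-1, by omega⟩
    rw [C0, Qv_trues_append, Qv_trues_append]
    have e1 : Qv (falses k' ++ rest) = qq k' + Qv rest := Qv_fshape _ hho
    have e2 : Qv (trues t ++ (falses (k'+1) ++ rest)) = qq (k'+1) + Qv rest := Qv_shape _ _ hho
    simp only [show k'+1-1 = k' by omega] at hδ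
    omega
  · refine ⟨t+1, by omega, by omega, ?_⟩
    rw [dmw_trues_ge (by omega), show t+1-t = 1 by omega]
    match k, hk with
    | 1, _ =>
      rw [C1b hho, Qv_trues_append, Qv_trues_append]
      have e2 : Qv (trues t ++ (falses 1 ++ rest)) = qq 1 + Qv rest := Qv_shape _ _ hho
      simp only [show (1:ℕ)-2 = 0 by omega, qq_zero] at hδ
      omega
    | (k''+2), _ =>
      rw [C1a, Qv_trues_append, Qv_trues_append]
      have e1 : Qv (falses k'' ++ rest) = qq k'' + Qv rest := Qv_fshape _ hho
      have e2 : Qv (trues t ++ (falses (k''+2) ++ rest)) = qq (k''+2) + Qv rest := Qv_shape _ _ hho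
      simp only [show k''+2-2 = k'' by omega] at hδ
      omega
  · refine ⟨t+(a+2), by omega, by omega, ?_⟩
    rw [dmw_trues_ge (by omega), show t+(a+2)-t = a+2 by omega]
    obtain rfl : k = a+3+b := by omega
    rw [Csplit, Qv_trues_append, Qv_trues_append,
      Qv_fshape _ (headOk_trues_append (by omega) _), Qv_trues_append,
      Qv_fshape _ hho, Qv_fshape _ hho]
    have e3 : qq (a+3+b) = qq (a+b+3) := by rw [show a+3+b = a+b+3 by ring]
    omega

lemma realize_shift (t k : ℕ) (rest : List Bool) (c : ℕ) (hc : 2 ≤ c) :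
    dmw (c + t + k) (trues t ++ (falses k ++ rest)) = trues t ++ (falses k ++ dmw c rest) := by
  rw [dmw_trues_ge (by omega), show c+t+k-t = c+k by omega,
    dmw_falses_ge (by omega), show c+k-k = c by omega]

lemma find {rest : List Bool} (h : NTl rest) (hm : Qv rest % 4 ≠ 0) :
    ∃ k', 1 ≤ k' ∧ (k' % 4 = 2 ∨ k' % 4 = 3) ∧ (Qv rest % 2 = 1 → k' % 4 = 3) ∧
      ∀ δ, DropOf k' δ → ∃ c, 2 ≤ c ∧ c ≤ rest.length ∧
        Qv (dmw c rest) + δ = Qv rest := by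
  induction h with
  | nil => rw [Qv_nil] at hm; omega
  | fin s => rw [Qv_trues] at hm; omega
  | @cons s k rest2 hs hk h2 ih =>
    have hho := NTl_headOk h2
    have hQ : Qv (trues s ++ (falses k ++ rest2)) = qq k + Qv rest2 := Qv_shape s k hho
    have hqm := qq_mod k
    have hlen := len_shape s k rest2
    by_cases h3 : k % 4 = 3
    · refine ⟨k, by omega, Or.inr h3, fun _ => h3, ?_⟩
      intro δ hδ
      obtain ⟨c, hc1, hc2, hc3⟩ := realize_first s k (by omega) hk h2 δ hδ
      exact ⟨c, by omega, by omega, hc3⟩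
    · by_cases h2e : k % 4 = 2 ∧ Qv (trues s ++ (falses k ++ rest2)) % 2 = 0
      · refine ⟨k, by omega, Or.inl h2e.1, ?_, ?_⟩
        · intro hodd; omega
        · intro δ hδ
          obtain ⟨c, hc1, hc2, hc3⟩ := realize_first s k (by omega) hk h2 δ hδ
          exact ⟨c, by omega, by omega, hc3⟩
      · -- recurse into rest2
        have hm2 : Qv rest2 % 4 ≠ 0 := by
          rcases (by omega : k % 4 = 0 ∨ k % 4 = 1 ∨ k % 4 = 2) with h' | h' | h'
          · have := hqm.1 h'; omega
          · have := hqm.2.1 h'; omega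
          · have := hqm.2.2.1 h'
            -- k ≡ 2 and whole Q is odd here
            omega
        obtain ⟨k', hk'1, hk'2, hk'3, hk'4⟩ := ih hm2
        refine ⟨k', hk'1, hk'2, ?_, ?_⟩
        · intro hodd
          apply hk'3
          rcases (by omega : k % 4 = 0 ∨ k % 4 = 1 ∨ k % 4 = 2) with h' | h' | h'
          · have := hqm.1 h'; omega
          · have := hqm.2.1 h'; omega
          · have := hqm.2.2.1 h'; omega
        · intro δ hδ
          obtain ⟨c, hc1, hc2, hc3⟩ := hk'4 δ hδ
          refine ⟨c + s + k, by omega, by omega, ?_⟩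
          rw [realize_shift s k rest2 c hc1, Qv_trues_append, Qv_trues_append,
            Qv_fshape _ (headOk_dmw _ hho), Qv_fshape _ hho]
          omega

/-- Existence of good moves for Dominator and Staller from a nice nonterminal state. -/
lemma exists_moves {l : List Bool} (h : Nice l) (h0 : Qv l ≠ 0) :
    (∃ c, 1 ≤ c ∧ c ≤ l.length ∧ Qv (dmw c l) < Qv l ∧
        1 + (Qv (dmw c l) + 3)/4 = Qv l / 4) ∧
    (∃ c, 1 ≤ c ∧ c ≤ l.length ∧ Qv (dmw c l) < Qv l ∧
        1 + Qv (dmw c l)/4 = (Qv l + 3)/4) := by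
  rcases h with ⟨t, rfl⟩ | ⟨t, k, rest, ht, hk, hrest, rfl⟩
  · rw [Qv_trues] at h0; omega
  · have hho := NTl_headOk hrest
    have hQ : Qv (trues t ++ (falses k ++ rest)) = qq k + Qv rest := Qv_shape t k hho
    have hlen := len_shape t k rest
    set l := trues t ++ (falses k ++ rest) with hl
    set M := Qv l with hM
    -- a generic packaging of a first-run realizer
    have real1 : ∀ δ, DropOf k δ → ∃ c, 1 ≤ c ∧ c ≤ l.length ∧ Qv (dmw c l) + δ = M := by
      intro δ hδ
      obtain ⟨c, hc1, hc2, hc3⟩ := realize_first t k ht hk hrest δ hδ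
      exact ⟨c, by omega, by omega, hc3⟩
    have hqm := qq_mod k
    by_cases hm : M % 4 = 0
    · -- use the first run, any residue
      have key : ∃ δ₁ δ₂, 4 ≤ δ₁ ∧ δ₁ ≤ 7 ∧ 1 ≤ δ₂ ∧ δ₂ ≤ 4 ∧ DropOf k δ₁ ∧ DropOf k δ₂ := by
        rcases (by omega : k % 4 = 0 ∨ k % 4 = 1 ∨ k % 4 = 2 ∨ k % 4 = 3) with h'|h'|h'|h'
        · obtain ⟨d1, d2⟩ := DropOf0 h' hk
          exact ⟨4, 1, by omega, by omega, by omega, by omega, d1, d2⟩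
        · have d := DropOf1 h'
          exact ⟨4, 4, by omega, by omega, by omega, by omega, d, d⟩
        · obtain ⟨d1, d2⟩ := DropOf2 h'
          exact ⟨6, 2, by omega, by omega, by omega, by omega, d1, d2⟩
        · obtain ⟨d1, d2⟩ := DropOf3 h'
          exact ⟨7, 1, by omega, by omega, by omega, by omega, d1, d2⟩
      obtain ⟨δ₁, δ₂, hb1, hb2, hb3, hb4, hd1, hd2⟩ := key
      obtain ⟨c1, hc11, hc12, hc13⟩ := real1 δ₁ hd1
      obtain ⟨c2, hc21, hc22, hc23⟩ := real1 δ₂ hd2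
      exact ⟨⟨c1, hc11, hc12, by omega, by omega⟩, ⟨c2, hc21, hc22, by omega, by omega⟩⟩
    · -- M % 4 ≠ 0 : find a run of residue 2 or 3
      have key : ∃ δ₁ δ₂, ((δ₁ = 7 ∧ δ₂ = 1) ∨ (δ₁ = 6 ∧ δ₂ = 2 ∧ M % 4 = 2)) ∧
          (∃ c, 1 ≤ c ∧ c ≤ l.length ∧ Qv (dmw c l) + δ₁ = M) ∧
          (∃ c, 1 ≤ c ∧ c ≤ l.length ∧ Qv (dmw c l) + δ₂ = M) := by
        by_cases h3 : k % 4 = 3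
        · obtain ⟨d1, d2⟩ := DropOf3 h3
          exact ⟨7, 1, Or.inl ⟨rfl, rfl⟩, real1 7 d1, real1 1 d2⟩
        · by_cases h2' : k % 4 = 2 ∧ M % 4 = 2
          · obtain ⟨d1, d2⟩ := DropOf2 h2'.1
            exact ⟨6, 2, Or.inr ⟨rfl, rfl, h2'.2⟩, real1 6 d1, real1 2 d2⟩
          · -- recurse into rest
            have hm2 : Qv rest % 4 ≠ 0 := by
              rcases (by omega : k % 4 = 0 ∨ k % 4 = 1 ∨ k % 4 = 2) with h'|h'|h'
              · have := hqm.1 h'; omega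
              · have := hqm.2.1 h'; omega
              · have := hqm.2.2.1 h'; omega
            obtain ⟨k', hk'1, hk'2, hk'3, hk'4⟩ := find hrest hm2
            have lift : ∀ δ, DropOf k' δ → ∃ c, 1 ≤ c ∧ c ≤ l.length ∧ Qv (dmw c l) + δ = M := by
              intro δ hδ
              obtain ⟨c, hc1, hc2, hc3⟩ := hk'4 δ hδ
              refine ⟨c + t + k, by omega, by omega, ?_⟩
              rw [hl, realize_shift t k rest c hc1, Qv_trues_append]
              have : Qv (falses k ++ dmw c rest) = qq k + Qv (dmw c rest) :=
                Qv_fshape _ (headOk_dmw _ hho)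
              rw [this]
              have : Qv (trues t ++ (falses k ++ rest)) = qq k + Qv rest := hQ
              omega
            rcases (by omega : k' % 4 = 2 ∨ k' % 4 = 3) with h'|h'
            · -- k' ≡ 2 : then Q rest is even so M % 4 = 2
              have hMeven : M % 4 = 2 := by
                have h5 := hk'3
                rcases (by omega : k % 4 = 0 ∨ k % 4 = 1 ∨ k % 4 = 2) with h''|h''|h''
                · have := hqm.1 h''
                  have hre : Qv rest % 2 = 0 := by
                    by_contra hre
                    have := h5 (by omega); omega
                  omega
                · have := hqm.2.1 h''
                  have hre : Qv rest % 2 = 0 := by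
                    by_contra hre
                    have := h5 (by omega); omega
                  omega
                · have := hqm.2.2.1 h''
                  have hre : Qv rest % 2 = 0 := by
                    by_contra hre
                    have := h5 (by omega); omega
                  -- here M % 4 = (2 + Qv rest) % 4 with Qv rest even and M%4 ≠ 0
                  omega
              obtain ⟨d1, d2⟩ := DropOf2 h'
              exact ⟨6, 2, Or.inr ⟨rfl, rfl, hMeven⟩, lift 6 d1, lift 2 d2⟩
            · obtain ⟨d1, d2⟩ := DropOf3 h'
              exact ⟨7, 1, Or.inl ⟨rfl, rfl⟩, lift 7 d1, lift 1 d2⟩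
      obtain ⟨δ₁, δ₂, hcase, ⟨c1, hc11, hc12, hc13⟩, ⟨c2, hc21, hc22, hc23⟩⟩ := key
      rcases hcase with ⟨rfl, rfl⟩ | ⟨rfl, rfl, hM2⟩
      · exact ⟨⟨c1, hc11, hc12, by omega, by omega⟩, ⟨c2, hc21, hc22, by omega, by omega⟩⟩
      · exact ⟨⟨c1, hc11, hc12, by omega, by omega⟩, ⟨c2, hc21, hc22, by omega, by omega⟩⟩

lemma gv_unfold (G : SimpleGraph V) [Fintype V] (dom : Bool) (S : Finset V) :
    gameVal G dom S =
      (if h : (Finset.univ.filter (fun x => ¬ closedNbr G x ⊆ S)).Nonempty then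
        if dom then
          (Finset.univ.filter (fun x => ¬ closedNbr G x ⊆ S)).attach.inf' (by simpa using h)
            (fun x => 1 + gameVal G false (S ∪ closedNbr G x.1))
        else
          (Finset.univ.filter (fun x => ¬ closedNbr G x ⊆ S)).attach.sup' (by simpa using h)
            (fun x => 1 + gameVal G true (S ∪ closedNbr G x.1))
      else 0) := by
  rw [gameVal]

lemma mem_filter_iff {α : Type*} {p : α → Prop} {inst : DecidablePred p} {s : Finset α}
    {a : α} : a ∈ @Finset.filter α p inst s ↔ a ∈ s ∧ p a := by
  letI := inst
  exact Finset.mem_filter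

def bits {m : ℕ} (S : Finset (Fin m)) : List Bool :=
  List.ofFn (fun i : Fin m => if i ∈ S then true else false)

lemma bits_length {m : ℕ} (S : Finset (Fin m)) : (bits S).length = m := by simp [bits]

lemma bits_getElem {m : ℕ} (S : Finset (Fin m)) (j : ℕ) (h : j < m) :
    (bits S)[j]'(by rw [bits_length]; exact h) =
      if (⟨j, h⟩ : Fin m) ∈ S then true else false := by
  simp [bits]

lemma bits_inj {m : ℕ} {S T : Finset (Fin m)} (h : bits S = bits T) : S = T := by
  rw [bits, bits, List.ofFn_inj] at h
  ext i
  have := congrFun h i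
  by_cases hS : i ∈ S <;> by_cases hT : i ∈ T <;> simp [hS, hT] at this ⊢

lemma corr {m : ℕ} (S : Finset (Fin m)) (x : Fin m) :
    bits (S ∪ closedNbr (SimpleGraph.pathGraph m) x) = dmw (x.val + 1) (bits S) := by
  apply List.ext_getElem
  · rw [bits_length, dmw_length, bits_length]
  · intro j h1 h2
    rw [bits_length] at h1
    have e1 := dmw_getElem (x.val+1) (bits S) j (by rw [bits_length]; exact h1)
    rw [e1, bits_getElem _ j h1, bits_getElem _ j h1]
    have hmem : ((⟨j, h1⟩ : Fin m) ∈ closedNbr (SimpleGraph.pathGraph m) x) ↔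
        (j ≤ x.val + 1 ∧ x.val + 1 ≤ j + 2) := by
      rw [closedNbr]
      constructor
      · intro hin
        have h' := (mem_filter_iff.mp hin).2
        rcases h' with h' | h'
        · have : j = x.val := by rw [Fin.ext_iff] at h'; exact h'
          omega
        · rw [SimpleGraph.pathGraph_adj] at h'
          rcases h' with h' | h' <;> (simp only [] at h'; omega)
      · intro h'
        refine mem_filter_iff.mpr ⟨Finset.mem_univ _, ?_⟩
        rcases Nat.lt_trichotomy j x.val with h'' | h'' | h''
        · exact Or.inr (by rw [SimpleGraph.pathGraph_adj]; right; simp only []; omega)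
        · exact Or.inl (by rw [Fin.ext_iff]; simpa using h'')
        · exact Or.inr (by rw [SimpleGraph.pathGraph_adj]; left; simp only []; omega)
    by_cases hS : (⟨j, h1⟩ : Fin m) ∈ S
    · by_cases hC : j ≤ x.val + 1 ∧ x.val + 1 ≤ j + 2
      · rw [if_pos (Finset.mem_union_left _ hS), if_pos hS]
        simp
      · rw [if_pos (Finset.mem_union_left _ hS), if_pos hS]
        simp
    · by_cases hC : j ≤ x.val + 1 ∧ x.val + 1 ≤ j + 2
      · rw [if_pos (Finset.mem_union_right _ (hmem.mpr hC)), if_neg hS]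
        simp [hC]
      · rw [if_neg (fun hmm => by
            rcases Finset.mem_union.mp hmm with h' | h'
            · exact hS h'
            · exact hC (hmem.mp h')), if_neg hS]
        rw [Bool.false_or, eq_comm, decide_eq_false_iff_not]
        exact hC

lemma legal_iff {m : ℕ} (S : Finset (Fin m)) (x : Fin m) :
    (¬ closedNbr (SimpleGraph.pathGraph m) x ⊆ S) ↔
      dmw (x.val + 1) (bits S) ≠ bits S := by
  rw [← corr]
  constructor
  · intro h hbit
    exact h (Finset.union_eq_left.mp (bits_inj hbit))
  · intro h hsub
    exact h (congrArg bits (Finset.union_eq_left.mpr hsub))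

lemma qaux_zero_trues : ∀ (l : List Bool) (k : ℕ), qaux k l = 0 → l = trues l.length := by
  intro l
  induction l with
  | nil => intro k _; rfl
  | cons b l ih =>
    intro k h
    cases b
    · exfalso
      rw [qaux_false_cons] at h
      have h2 := ih (k+1) h
      rw [h2, qaux_trues] at h
      simp only [qq] at h
      omega
    · rw [qaux_true_cons] at h
      have h2 : Qv l = 0 := by omega
      rw [List.length_cons, trues_succ]
      conv_lhs => rw [ih 0 h2]

lemma classical_union_eq {m : ℕ} (S T : Finset (Fin m)) :
    @Union.union _ (@Finset.instUnion (Fin m) (fun a b => Classical.propDecidable (a = b))) S T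
      = S ∪ T := by
  ext y
  rw [@Finset.mem_union _ (fun a b => Classical.propDecidable (a = b)), Finset.mem_union]

lemma key : ∀ (N m : ℕ) (S : Finset (Fin m)), Nice (bits S) → Qv (bits S) = N →
    gameVal (SimpleGraph.pathGraph m) true S = N / 4 ∧
    gameVal (SimpleGraph.pathGraph m) false S = (N + 3) / 4 := by
  intro N
  induction N using Nat.strong_induction_on with
  | _ N IH =>
    intro m S hNice hQ
    by_cases hzero : N = 0
    · subst hzero
      have hall : bits S = trues m := by
        have := qaux_zero_trues (bits S) 0 hQ
        rwa [bits_length] at this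
      constructor <;>
        (rw [gv_unfold]
         split
         · next h =>
             exfalso
             obtain ⟨x, hx⟩ := h
             have hleg := (mem_filter_iff.mp hx).2
             rw [legal_iff] at hleg
             exact hleg (by rw [hall, dmw_trues_all])
         · simp)
    · obtain ⟨⟨cD, hD1, hD2, hDlt, hDeq⟩, ⟨cS, hS1, hS2, hSlt, hSeq⟩⟩ :=
        exists_moves hNice (by omega)
      rw [bits_length] at hD2 hS2
      rw [hQ] at hDlt hDeq hSlt hSeq
      have child : ∀ x : Fin m, (¬ closedNbr (SimpleGraph.pathGraph m) x ⊆ S) →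
          Nice (bits (S ∪ closedNbr (SimpleGraph.pathGraph m) x)) ∧
          ∃ δ, 1 ≤ δ ∧ δ ≤ 7 ∧ Qv (bits (S ∪ closedNbr (SimpleGraph.pathGraph m) x)) + δ = N := by
        intro x hx
        rw [legal_iff] at hx
        rcases move_all hNice (x.val+1) with h | ⟨h1, δ, h2, h3, h4⟩
        · exact absurd h hx
        · rw [corr]
          exact ⟨h1, δ, h2, h3, by rw [hQ] at h4; exact h4⟩
      have hlegD : ¬ closedNbr (SimpleGraph.pathGraph m) (⟨cD - 1, by omega⟩ : Fin m) ⊆ S := by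
        rw [legal_iff]
        have hxv : ((⟨cD - 1, by omega⟩ : Fin m) : ℕ) + 1 = cD := by simp; omega
        rw [hxv]
        intro heq
        rw [heq] at hDlt
        omega
      have hlegS : ¬ closedNbr (SimpleGraph.pathGraph m) (⟨cS - 1, by omega⟩ : Fin m) ⊆ S := by
        rw [legal_iff]
        have hxv : ((⟨cS - 1, by omega⟩ : Fin m) : ℕ) + 1 = cS := by simp; omega
        rw [hxv]
        intro heq
        rw [heq] at hSlt
        omega
      constructor
      · rw [gv_unfold]
        simp only [classical_union_eq]
        split
        · rw [if_pos (by trivial)]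
          apply le_antisymm
          · set x : Fin m := ⟨cD - 1, by omega⟩ with hx
            have hxv : (x : ℕ) + 1 = cD := by simp [hx]; omega
            have hleg : ¬ closedNbr (SimpleGraph.pathGraph m) x ⊆ S := hlegD
            refine le_trans (Finset.inf'_le _
              (Finset.mem_attach _ ⟨x, mem_filter_iff.mpr ⟨Finset.mem_univ _, hleg⟩⟩)) ?_
            obtain ⟨hNc, δ, hδ1, hδ7, hQc⟩ := child x hleg
            have hIH := (IH (Qv (bits (S ∪ closedNbr (SimpleGraph.pathGraph m) x)))
              (by omega) m _ hNc rfl).2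
            show 1 + gameVal (SimpleGraph.pathGraph m) false
              (S ∪ closedNbr (SimpleGraph.pathGraph m) x) ≤ N / 4
            rw [hIH]
            have hcb : bits (S ∪ closedNbr (SimpleGraph.pathGraph m) x)
                = dmw cD (bits S) := by rw [corr, hxv]
            rw [hcb]
            omega
          · apply Finset.le_inf'
            rintro ⟨x, hx⟩ -
            have hleg := (mem_filter_iff.mp hx).2
            obtain ⟨hNc, δ, hδ1, hδ7, hQc⟩ := child x hleg
            have hIH := (IH (Qv (bits (S ∪ closedNbr (SimpleGraph.pathGraph m) x)))
              (by omega) m _ hNc rfl).2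
            show N / 4 ≤ 1 + gameVal (SimpleGraph.pathGraph m) false
              (S ∪ closedNbr (SimpleGraph.pathGraph m) x)
            rw [hIH]
            omega
        · next h =>
            exact absurd ⟨_, mem_filter_iff.mpr ⟨Finset.mem_univ _, hlegD⟩⟩ h
      · rw [gv_unfold]
        simp only [classical_union_eq]
        split
        · rw [if_neg (by simp)]
          apply le_antisymm
          · apply Finset.sup'_le
            rintro ⟨x, hx⟩ -
            have hleg := (mem_filter_iff.mp hx).2
            obtain ⟨hNc, δ, hδ1, hδ7, hQc⟩ := child x hleg
            have hIH := (IH (Qv (bits (S ∪ closedNbr (SimpleGraph.pathGraph m) x)))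
              (by omega) m _ hNc rfl).1
            show 1 + gameVal (SimpleGraph.pathGraph m) true
              (S ∪ closedNbr (SimpleGraph.pathGraph m) x) ≤ (N + 3) / 4
            rw [hIH]
            omega
          · set x : Fin m := ⟨cS - 1, by omega⟩ with hx
            have hxv : (x : ℕ) + 1 = cS := by simp [hx]; omega
            have hleg : ¬ closedNbr (SimpleGraph.pathGraph m) x ⊆ S := hlegS
            refine le_trans ?_ (Finset.le_sup' _
              (Finset.mem_attach _ ⟨x, mem_filter_iff.mpr ⟨Finset.mem_univ _, hleg⟩⟩))
            obtain ⟨hNc, δ, hδ1, hδ7, hQc⟩ := child x hleg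
            have hIH := (IH (Qv (bits (S ∪ closedNbr (SimpleGraph.pathGraph m) x)))
              (by omega) m _ hNc rfl).1
            show (N + 3) / 4 ≤ 1 + gameVal (SimpleGraph.pathGraph m) true
              (S ∪ closedNbr (SimpleGraph.pathGraph m) x)
            rw [hIH]
            have hcb : bits (S ∪ closedNbr (SimpleGraph.pathGraph m) x)
                = dmw cS (bits S) := by rw [corr, hxv]
            rw [hcb]
            omega
        · next h =>
            exact absurd ⟨_, mem_filter_iff.mpr ⟨Finset.mem_univ _, hlegD⟩⟩ h

lemma getElem_shape (t k s : ℕ) (j : ℕ) (hj : j < (trues t ++ (falses k ++ trues s)).length) :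
    (trues t ++ (falses k ++ trues s))[j] = decide (j < t ∨ t + k ≤ j) := by
  have hlen : (trues t ++ (falses k ++ trues s)).length = t + k + s := by
    simp [trues, falses]; ring
  rcases (by omega : j < t ∨ (t ≤ j ∧ j < t + k) ∨ t + k ≤ j) with h | ⟨h1', h2'⟩ | h
  · rw [List.getElem_append_left (by simpa [trues] using h)]
    simp [trues, List.getElem_replicate, h]
  · rw [List.getElem_append_right (by simp [trues]; omega),
      List.getElem_append_left (by simp [trues, falses]; omega)]
    simp [falses, List.getElem_replicate]
    omega
  · rw [List.getElem_append_right (by simp [trues]; omega),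
      List.getElem_append_right (by simp [trues, falses]; omega)]
    simp [trues, List.getElem_replicate]
    omega

/-- `γ_g(P′_n) = γ_g(P″_n) = ⌈n/2⌉ − 1` if `n ≡ 3 (mod 4)`, and `⌈n/2⌉` otherwise.
Here `P′_n` is the path on `n+1` vertices with end-vertex `0` dominated, and
`P″_n` is the path on `n+2` vertices with both end-vertices dominated. -/
theorem gammaD_paths (n : ℕ) :
    gameVal (SimpleGraph.pathGraph (n+1)) true ({0} : Finset (Fin (n+1)))
      = (if n % 4 = 3 then (n+1)/2 - 1 else (n+1)/2) ∧
    gameVal (SimpleGraph.pathGraph (n+2)) true ({0, Fin.last (n+1)} : Finset (Fin (n+2)))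
      = (if n % 4 = 3 then (n+1)/2 - 1 else (n+1)/2) := by
  have hho0 : headOk (trues 0) := Or.inl rfl
  have hho1 : headOk (trues 1) := Or.inr ⟨[], rfl⟩
  have hb1 : bits ({0} : Finset (Fin (n+1))) = trues 1 ++ (falses n ++ trues 0) := by
    apply List.ext_getElem
    · rw [bits_length]; simp [trues, falses]
    · intro j h1 h2
      rw [bits_length] at h1
      rw [bits_getElem _ j h1, getElem_shape]
      have hmem : (⟨j, h1⟩ : Fin (n+1)) ∈ ({0} : Finset (Fin (n+1))) ↔ j = 0 := by
        simp [Fin.ext_iff]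
      by_cases hj : j = 0
      · rw [if_pos (hmem.mpr hj), eq_comm, decide_eq_true_eq]
        omega
      · rw [if_neg (by rw [hmem]; exact hj), eq_comm, decide_eq_false_iff_not]
        omega
  have hb2 : bits ({0, Fin.last (n+1)} : Finset (Fin (n+2)))
      = trues 1 ++ (falses n ++ trues 1) := by
    apply List.ext_getElem
    · rw [bits_length]; simp [trues, falses]
    · intro j h1 h2
      rw [bits_length] at h1
      rw [bits_getElem _ j h1, getElem_shape]
      have hmem : (⟨j, h1⟩ : Fin (n+2)) ∈ ({0, Fin.last (n+1)} : Finset (Fin (n+2)))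
          ↔ (j = 0 ∨ j = n+1) := by
        simp [Fin.ext_iff]
      by_cases hj : j = 0 ∨ j = n+1
      · rw [if_pos (hmem.mpr hj), eq_comm, decide_eq_true_eq]
        omega
      · rw [if_neg (by rw [hmem]; exact hj), eq_comm, decide_eq_false_iff_not]
        omega
  have hq1 : Qv (trues 1 ++ (falses n ++ trues 0)) = qq n := by
    rw [Qv_shape 1 n hho0, Qv_trues]
    omega
  have hq2 : Qv (trues 1 ++ (falses n ++ trues 1)) = qq n := by
    rw [Qv_shape 1 n hho1, Qv_trues]
    omega
  have h1 := (key (qq n) (n+1) {0}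
    (by rw [hb1]; exact Nice_mk 1 n (le_refl 1) (NTl.fin 0))
    (by rw [hb1, hq1])).1
  have h2 := (key (qq n) (n+2) {0, Fin.last (n+1)}
    (by rw [hb2]; exact Nice_mk 1 n (le_refl 1) (NTl.fin 1))
    (by rw [hb2, hq2])).1
  have harith : qq n / 4 = (if n % 4 = 3 then (n+1)/2 - 1 else (n+1)/2) := by
    have h4 := dd_cases n
    by_cases e1 : n % 4 = 3
    · rw [if_pos e1]; simp only [qq]; omega
    · rw [if_neg e1]; simp only [qq]; omega
  exact ⟨h1.trans harith, h2.trans harith⟩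


end

end DomGame
end
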